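/- Normalized little q-Jacobi at a = q^{−k}: let q ∈ (0,1), n ≥ 1 an integer, k ∈ {1, …, n}, and b a real number. Then the polynomial identity ∑_{j=0}^{n} [(q^{−n};q)_j / (q;q)_j] (b q^{n−k+1};q)_j (q^{j−k+1};q)_{n−j} (qx)^j = c · (qx)^k · p_{n−k}(x; q^{k}, b) holds, where c = (−1)^k q^{k(k−1)/2 − nk} (b q^{n−k+1};q)_k (q^{k+1};q)_{n−k}. -/

import Mathlib

/-- The q-Pochhammer symbol `(a;q)_k = ∏_{j=0}^{k-1} (1 - a q^j)`. -/
noncomputable def qPoch (q a : ℝ) (k : ℕ) : ℝ :=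
  ∏ j ∈ Finset.range k, (1 - a * q ^ j)

/-- The little q-Jacobi polynomial
`p_n(x; a, b) = ∑_{k=0}^{n} [(q^{−n};q)_k (a b q^{n+1};q)_k / ((a q;q)_k (q;q)_k)] (q x)^k`. -/
noncomputable def littleQJacobi (q a b : ℝ) (n : ℕ) : Polynomial ℝ :=
  ∑ k ∈ Finset.range (n + 1),
    Polynomial.C (qPoch q (q ^ (-(n : ℤ))) k * qPoch q (a * b * q ^ (n + 1)) k /
      (qPoch q (a * q) k * qPoch q q k)) * (Polynomial.C q * Polynomial.X) ^ k

/-- normalized little q-Jacobi polynomial at `a = q^{−k}`: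
`∑_{j=0}^{n} [(q^{−n};q)_j / (q;q)_j] (b q^{n−k+1};q)_j (q^{j−k+1};q)_{n−j} (qx)^j
  = c · (qx)^k · p_{n−k}(x; q^{k}, b)`,
where `c = (−1)^k q^{k(k−1)/2 − nk} (b q^{n−k+1};q)_k (q^{k+1};q)_{n−k}`. -/

noncomputable def Zp (q : ℝ) (e : ℤ) (j : ℕ) : ℝ :=
  ∏ i ∈ Finset.range j, (1 - q ^ (e + (i : ℤ)))

lemma qPoch_zpow (q : ℝ) (hq : q ≠ 0) (e : ℤ) (j : ℕ) :
    qPoch q (q ^ e) j = Zp q e j := by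
  unfold qPoch Zp
  refine Finset.prod_congr rfl fun i _ => ?_
  rw [zpow_add₀ hq, zpow_natCast]

lemma qPoch_natpow (q : ℝ) (hq : q ≠ 0) (m j : ℕ) :
    qPoch q (q ^ m) j = Zp q m j := by
  rw [← zpow_natCast q m, qPoch_zpow q hq]

lemma qPoch_q (q : ℝ) (hq : q ≠ 0) (j : ℕ) :
    qPoch q q j = Zp q 1 j := by
  have h := qPoch_zpow q hq 1 j
  rw [zpow_one] at h
  exact h

lemma Zp_add (q : ℝ) (e : ℤ) (s t : ℕ) :
    Zp q e (s + t) = Zp q e s * Zp q (e + s) t := by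
  unfold Zp
  rw [Finset.prod_range_add]
  congr 1
  refine Finset.prod_congr rfl fun i _ => ?_
  congr 1
  push_cast; ring

lemma Zp_pos (q : ℝ) (hq0 : 0 < q) (hq1 : q < 1) (e : ℤ) (he : 1 ≤ e) (j : ℕ) :
    0 < Zp q e j := by
  apply Finset.prod_pos
  intro i _
  have h : q ^ (e + (i : ℤ)) < 1 := zpow_lt_one₀ hq0 hq1 (by positivity)
  linarith

lemma Zp_ne (q : ℝ) (hq0 : 0 < q) (hq1 : q < 1) (e : ℤ) (he : 1 ≤ e) (j : ℕ) :
    Zp q e j ≠ 0 := ne_of_gt (Zp_pos q hq0 hq1 e he j)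

lemma Zp_eq_zero (q : ℝ) (e : ℤ) (j i : ℕ) (hi : i < j) (he : e + (i : ℤ) = 0) :
    Zp q e j = 0 := by
  unfold Zp
  apply Finset.prod_eq_zero (Finset.mem_range.mpr hi)
  rw [he]; simp

lemma zpow_sum_range (q : ℝ) (hq : q ≠ 0) (f : ℕ → ℤ) (j : ℕ) :
    q ^ (∑ i ∈ Finset.range j, f i) = ∏ i ∈ Finset.range j, q ^ f i := by
  induction j with
  | zero => simp
  | succ j ih => rw [Finset.sum_range_succ, Finset.prod_range_succ, zpow_add₀ hq, ih]

lemma qPoch_neg (q : ℝ) (hq : q ≠ 0) (n j : ℕ) :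
    qPoch q (q ^ (-(n : ℤ))) j
      = (-1) ^ j * q ^ (∑ i ∈ Finset.range j, ((i : ℤ) - n)) * Zp q ((n : ℤ) - j + 1) j := by
  rw [qPoch_zpow q hq]
  unfold Zp
  have key : ∀ i ∈ Finset.range j,
      (1 - q ^ (-(n : ℤ) + (i : ℤ))) = (-1) * q ^ ((i : ℤ) - n) * (1 - q ^ ((n : ℤ) - i)) := by
    intro i _
    have h1 : (-(n : ℤ) + (i : ℤ)) = (i : ℤ) - n := by ring
    have h2 : q ^ ((i : ℤ) - n) * q ^ ((n : ℤ) - i) = 1 := by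
      rw [← zpow_add₀ hq]; norm_num
    rw [h1]; linear_combination -h2
  rw [Finset.prod_congr rfl key, Finset.prod_mul_distrib, Finset.prod_mul_distrib,
    Finset.prod_const, zpow_sum_range q hq]
  have hrefl : ∏ i ∈ Finset.range j, (1 - q ^ ((n : ℤ) - i))
      = ∏ i ∈ Finset.range j, (1 - q ^ ((n : ℤ) - j + 1 + (i : ℤ))) := by
    rw [← Finset.prod_range_reflect]
    refine Finset.prod_congr rfl fun i hi => ?_
    have hij : i < j := Finset.mem_range.mp hi
    congr 1
    have h1 : ((j - 1 - i : ℕ) : ℤ) = (j : ℤ) - 1 - i := by omega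
    rw [h1]; ring
  rw [hrefl, Finset.card_range]

lemma qPoch_split (q a : ℝ) (s t : ℕ) :
    qPoch q a (s + t) = qPoch q a s * qPoch q (a * q ^ s) t := by
  unfold qPoch
  rw [Finset.prod_range_add]
  congr 1
  refine Finset.prod_congr rfl fun i _ => ?_
  rw [pow_add]; ring

lemma sum_shift_two (c : ℤ) (j : ℕ) :
    2 * (∑ i ∈ Finset.range j, ((i : ℤ) - c)) = j * (j - 1) - 2 * c * j := by
  have h := Finset.sum_range_id_mul_two j
  have hcast : ((∑ i ∈ Finset.range j, i : ℕ) : ℤ) * 2 = (j : ℤ) * (j - 1) := by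
    rcases Nat.eq_zero_or_pos j with hj | hj
    · subst hj; simp
    · have := congrArg (fun x : ℕ => (x : ℤ)) h
      push_cast [Nat.cast_sub hj] at this
      simpa using this
  rw [Finset.sum_sub_distrib, Finset.sum_const, Finset.card_range, nsmul_eq_mul]
  push_cast at hcast ⊢
  linarith

lemma key (q b x : ℝ) (hq0 : 0 < q) (hq1 : q < 1) (k N m : ℕ) (hk : 1 ≤ k) (hm : m ≤ N) :
    qPoch q (q ^ (-((k + N : ℕ) : ℤ))) (k + m) / qPoch q q (k + m) *
        qPoch q (b * q ^ ((N : ℤ) + 1)) (k + m) *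
        qPoch q (q ^ ((m : ℤ) + 1)) (N - m) * (q * x) ^ (k + m)
      = ((-1 : ℝ) ^ k * q ^ (((k * (k - 1) / 2 : ℕ) : ℤ) - (((k + N) * k : ℕ) : ℤ)) *
            qPoch q (b * q ^ ((N : ℤ) + 1)) k * qPoch q (q ^ (k + 1)) N) *
          (q * x) ^ k *
          (qPoch q (q ^ (-(N : ℤ))) m * qPoch q (q ^ k * b * q ^ (N + 1)) m /
              (qPoch q (q ^ k * q) m * qPoch q q m) * (q * x) ^ m) := by
  have hq : q ≠ 0 := ne_of_gt hq0
  have hbase1 : q ^ k * b * q ^ (N + 1) = (b * q ^ ((N : ℤ) + 1)) * q ^ k := by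
    have h : q ^ ((N : ℤ) + 1) = q ^ (N + 1 : ℕ) := by
      rw [← zpow_natCast]; norm_num
    rw [h]; ring
  have hbase2 : q ^ k * q = q ^ (k + 1) := by rw [pow_succ]
  rw [hbase1, hbase2]
  rw [qPoch_neg q hq (k + N) (k + m), qPoch_neg q hq N m,
      qPoch_q q hq (k + m), qPoch_q q hq m,
      qPoch_zpow q hq ((m : ℤ) + 1) (N - m),
      qPoch_natpow q hq (k + 1) N, qPoch_natpow q hq (k + 1) m,
      qPoch_split q (b * q ^ ((N : ℤ) + 1)) k m]
  -- split the big Zp's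
  have hs1 : Zp q (((k + N : ℕ) : ℤ) - ((k + m : ℕ) : ℤ) + 1) (k + m)
      = Zp q ((N : ℤ) - m + 1) m * Zp q ((N : ℤ) + 1) k := by
    have e1 : (((k + N : ℕ) : ℤ) - ((k + m : ℕ) : ℤ) + 1) = (N : ℤ) - m + 1 := by
      push_cast; ring
    rw [e1, Nat.add_comm k m, Zp_add]
    congr 2
    ring
  have hs2 : Zp q 1 (k + m) = Zp q 1 m * Zp q ((m : ℤ) + 1) k := by
    rw [Nat.add_comm k m, Zp_add]
    congr 2
    ring
  have hs3 : Zp q ((k + 1 : ℕ) : ℤ) N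
      = Zp q ((k + 1 : ℕ) : ℤ) m * Zp q (((k + 1 : ℕ) : ℤ) + m) (N - m) := by
    have := Zp_add q ((k + 1 : ℕ) : ℤ) m (N - m)
    rwa [show m + (N - m) = N by omega] at this
  -- the product identity
  have hZ2 : Zp q ((N : ℤ) + 1) k ≠ 0 := Zp_ne q hq0 hq1 _ (by omega) k
  have hI : Zp q ((m : ℤ) + 1) (N - m)
      = Zp q ((m : ℤ) + 1) k * Zp q (((k + 1 : ℕ) : ℤ) + m) (N - m) / Zp q ((N : ℤ) + 1) k := by
    rw [eq_div_iff hZ2]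
    have h1 := Zp_add q ((m : ℤ) + 1) (N - m) k
    have h2 := Zp_add q ((m : ℤ) + 1) k (N - m)
    rw [show (m : ℤ) + 1 + ((N - m : ℕ) : ℤ) = (N : ℤ) + 1 by push_cast [Nat.cast_sub hm]; ring] at h1
    rw [show (m : ℤ) + 1 + (k : ℕ) = ((k + 1 : ℕ) : ℤ) + m by push_cast; ring] at h2
    rw [show (N - m) + k = k + (N - m) by omega] at h1
    rw [h2] at h1
    linarith [h1]
  -- exponent identity
  have hdiv : ((k * (k - 1) / 2 : ℕ) : ℤ) * 2 = (k : ℤ) * ((k : ℤ) - 1) := by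
    have h2 : 2 ∣ k * (k - 1) := by
      rcases Nat.even_or_odd k with h | h
      · exact Dvd.dvd.mul_right h.two_dvd _
      · have : Even (k - 1) := by
          rcases h with ⟨t, ht⟩; exact ⟨t, by omega⟩
        exact Dvd.dvd.mul_left this.two_dvd _
    have h3 : k * (k - 1) / 2 * 2 = k * (k - 1) := Nat.div_mul_cancel h2
    have h4 : ((k * (k - 1) / 2 : ℕ) : ℤ) * 2 = ((k * (k - 1) : ℕ) : ℤ) := by
      exact_mod_cast h3
    rw [h4]
    have h5 : ((k - 1 : ℕ) : ℤ) = (k : ℤ) - 1 := by omega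
    push_cast [h5]
    ring
  have hS : (∑ i ∈ Finset.range (k + m), ((i : ℤ) - ((k + N : ℕ) : ℤ)))
      = (((k * (k - 1) / 2 : ℕ) : ℤ) - (((k + N) * k : ℕ) : ℤ))
        + (∑ i ∈ Finset.range m, ((i : ℤ) - (N : ℤ))) := by
    have h1 := sum_shift_two ((k + N : ℕ) : ℤ) (k + m)
    have h2 := sum_shift_two (N : ℤ) m
    simp only [Nat.cast_add, Nat.cast_mul] at h1 h2 ⊢
    linarith [h1, h2, hdiv]
  rw [hs1, hs2, hs3, hI, hS, zpow_add₀ hq]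
  have hZ3 : Zp q 1 m ≠ 0 := Zp_ne q hq0 hq1 _ (by norm_num) m
  have hZ4 : Zp q ((m : ℤ) + 1) k ≠ 0 := Zp_ne q hq0 hq1 _ (by omega) k
  have hZ6 : Zp q ((k + 1 : ℕ) : ℤ) m ≠ 0 := Zp_ne q hq0 hq1 _ (by omega) m
  field_simp
  ring

theorem littleQJacobi_a_qnegk (q b : ℝ) (n k : ℕ)
    (hn : 1 ≤ n) (hk : 1 ≤ k) (hkn : k ≤ n) (hq0 : 0 < q) (hq1 : q < 1) :
    ∀ x : ℝ,
      ∑ j ∈ Finset.range (n + 1),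
          qPoch q (q ^ (-(n : ℤ))) j / qPoch q q j *
            qPoch q (b * q ^ ((n : ℤ) - (k : ℤ) + 1)) j *
            qPoch q (q ^ ((j : ℤ) - (k : ℤ) + 1)) (n - j) * (q * x) ^ j =
        ((-1 : ℝ) ^ k * q ^ (((k * (k - 1) / 2 : ℕ) : ℤ) - ((n * k : ℕ) : ℤ)) *
            qPoch q (b * q ^ ((n : ℤ) - (k : ℤ) + 1)) k * qPoch q (q ^ (k + 1)) (n - k)) *
          (q * x) ^ k * (littleQJacobi q (q ^ k) b (n - k)).eval x := by
  intro x
  have hq : q ≠ 0 := ne_of_gt hq0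
  obtain ⟨N, rfl⟩ : ∃ N, n = k + N := ⟨n - k, by omega⟩
  rw [show k + N - k = N from by omega]
  have e3 : ((k + N : ℕ) : ℤ) - (k : ℤ) + 1 = (N : ℤ) + 1 := by push_cast; ring
  rw [e3, littleQJacobi, Polynomial.eval_finset_sum]
  simp only [Polynomial.eval_mul, Polynomial.eval_pow, Polynomial.eval_C, Polynomial.eval_X]
  rw [Finset.mul_sum]
  rw [show k + N + 1 = k + (N + 1) from by omega, Finset.sum_range_add]
  have h0 : ∀ j ∈ Finset.range k,
      qPoch q (q ^ (-((k + N : ℕ) : ℤ))) j / qPoch q q j *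
          qPoch q (b * q ^ ((N : ℤ) + 1)) j *
          qPoch q (q ^ ((j : ℤ) - (k : ℤ) + 1)) (k + N - j) * (q * x) ^ j = 0 := by
    intro j hj
    have hjk : j < k := Finset.mem_range.mp hj
    have hz : qPoch q (q ^ ((j : ℤ) - (k : ℤ) + 1)) (k + N - j) = 0 := by
      rw [qPoch_zpow q hq]
      exact Zp_eq_zero q _ _ (k - 1 - j) (by omega) (by omega)
    rw [hz, mul_zero, zero_mul]
  rw [Finset.sum_eq_zero h0, zero_add]
  refine Finset.sum_congr rfl fun m hm => ?_
  have hm' : m ≤ N := by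
    have := Finset.mem_range.mp hm; omega
  have e1 : ((k + m : ℕ) : ℤ) - (k : ℤ) + 1 = (m : ℤ) + 1 := by push_cast; ring
  have e2 : k + N - (k + m) = N - m := by omega
  rw [e1, e2]
  exact key q b x hq0 hq1 k N m hk hm'
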